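/- Let U', g and J = J⁺_{e^{iφ}} (φ ∈ ℝ) be as in Theorem 1. Then J is not integrable: its Nijenhuis tensor N_J(X,Y) = [JX, JY] − [X,Y] − J[JX, Y] − J[X, JY] (defined on smooth vector fields X, Y on U' via the Lie bracket) does not vanish identically on U'. Consequently, for every φ ∈ [0, 2π) the almost-Kähler structure (U', g, J⁺_{e^{iφ}}) is non-Kähler. -/

import Mathlib

noncomputable section

/-- `w(z₁,z₂) = v − 2z₂z̄₂` where `v = z₁ + z̄₁ = 2 Re z₁`. -/
def wDef (p : ℂ × ℂ) : ℝ := 2 * p.1.re - 2 * Complex.normSq p.2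

/-- The region `U' = {(z₁,z₂) ∈ ℂ² : v − 2z₂z̄₂ > 0}`. -/
def Uprime : Set (ℂ × ℂ) := {p | 0 < wDef p}

/-- `K = log(v − 2z₂z̄₂)`. -/
def KDef (p : ℂ × ℂ) : ℝ := Real.log (wDef p)

/-- `K` as a function of `v` at fixed `z₂`. -/
def KofV (z₂ : ℂ) (v : ℝ) : ℝ := Real.log (v - 2 * Complex.normSq z₂)

/-- `K_v = ∂K/∂v`. -/
def Kv (p : ℂ × ℂ) : ℝ := deriv (KofV p.2) (2 * p.1.re)

/-- `K_vv = ∂²K/∂v²`. -/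
def Kvv (p : ℂ × ℂ) : ℝ := deriv (deriv (KofV p.2)) (2 * p.1.re)

/-- The Wirtinger derivative `∂G/∂z = ½(∂_x G − i ∂_y G)` of `G : ℂ → ℂ` at `c`. -/
def wirtD (G : ℂ → ℂ) (c : ℂ) : ℂ :=
  (deriv (fun x : ℝ => G ((x : ℂ) + (c.im : ℂ) * Complex.I)) c.re -
    Complex.I * deriv (fun y : ℝ => G ((c.re : ℂ) + (y : ℂ) * Complex.I)) c.im) / 2

/-- The Wirtinger derivative `∂G/∂z̄ = ½(∂_x G + i ∂_y G)` of `G : ℂ → ℂ` at `c`. -/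
def wirtDbar (G : ℂ → ℂ) (c : ℂ) : ℂ :=
  (deriv (fun x : ℝ => G ((x : ℂ) + (c.im : ℂ) * Complex.I)) c.re +
    Complex.I * deriv (fun y : ℝ => G ((c.re : ℂ) + (y : ℂ) * Complex.I)) c.im) / 2

/-- `K_{v2} = ∂²K/∂v∂z₂` (Wirtinger derivative in `z₂` of `K_v`). -/
def Kv2 (p : ℂ × ℂ) : ℂ :=
  wirtD (fun z₂ => ((deriv (KofV z₂) (2 * p.1.re) : ℝ) : ℂ)) p.2

/-- `K_{v2̄} = ∂²K/∂v∂z̄₂`. -/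
def Kv2bar (p : ℂ × ℂ) : ℂ :=
  wirtDbar (fun z₂ => ((deriv (KofV z₂) (2 * p.1.re) : ℝ) : ℂ)) p.2

/-- `K_{22̄} = ∂²K/∂z₂∂z̄₂` (at fixed `v`). -/
def K22bar (p : ℂ × ℂ) : ℂ :=
  wirtDbar (fun z₂ =>
    wirtD (fun u => ((Real.log (2 * p.1.re - 2 * Complex.normSq u) : ℝ) : ℂ)) z₂) p.2

/-- The 1-form `dz₁ − 2z̄₂dz₂` evaluated on a real tangent vector `X ∈ ℂ² ≅ ℝ⁴`. -/
def AForm (p : ℂ × ℂ) (X : ℂ × ℂ) : ℂ := X.1 - 2 * starRingEnd ℂ p.2 * X.2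

/-- The explicit Ricci-flat metric
`g = (v − 2z₂z̄₂)^{−1/2}(dz₁ − 2z̄₂dz₂)(dz̄₁ − 2z₂dz̄₂) + 4(v − 2z₂z̄₂)^{1/2} dz₂ dz̄₂`
(with `2αβ = α⊗β + β⊗α`) on real tangent vectors. -/
def gExpl (p : ℂ × ℂ) (X Y : ℂ × ℂ) : ℝ :=
  1 / Real.sqrt (wDef p) * (AForm p X * starRingEnd ℂ (AForm p Y)).re +
    4 * Real.sqrt (wDef p) * (X.2 * starRingEnd ℂ Y.2).re

/-- The almost complex structure
`J⁺_{e^{iφ}} = 2Re{ i e^{iφ} [ (2(v − 2z₂z̄₂)^{1/2})^{−1}(dz₁ − 2z̄₂dz₂) ⊗ (∂_{z̄₂} + 2z₂∂_{z̄₁}) − 2(v − 2z₂z̄₂)^{1/2} dz₂ ⊗ ∂_{z̄₁} ] }`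
as a real endomorphism of the tangent space `ℂ² ≅ ℝ⁴`: a real tangent vector `X`
corresponds to `X.1 ∂_{z₁} + conj X.1 ∂_{z̄₁} + X.2 ∂_{z₂} + conj X.2 ∂_{z̄₂}` in the
complexified tangent space; the components below are the `∂_{z₁}`- and
`∂_{z₂}`-coefficients of `(T + T̄)(X)`. -/
def JExpl (φ : ℝ) (p : ℂ × ℂ) (X : ℂ × ℂ) : ℂ × ℂ :=
  (starRingEnd ℂ (Complex.I * Complex.exp ((φ : ℂ) * Complex.I) *
      (AForm p X / (2 * (Real.sqrt (wDef p) : ℂ)) * (2 * p.2) -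
        2 * (Real.sqrt (wDef p) : ℂ) * X.2)),
   starRingEnd ℂ (Complex.I * Complex.exp ((φ : ℂ) * Complex.I) *
      (AForm p X / (2 * (Real.sqrt (wDef p) : ℂ)))))

/-- The Lie bracket `[X,Y]` of two vector fields on (an open subset of) `ℂ² ≅ ℝ⁴`. -/
def lieBr (X Y : ℂ × ℂ → ℂ × ℂ) (p : ℂ × ℂ) : ℂ × ℂ :=
  fderiv ℝ Y p (X p) - fderiv ℝ X p (Y p)

/-- The vector field `J⁺_{e^{iφ}} X`. -/
def JExplField (φ : ℝ) (X : ℂ × ℂ → ℂ × ℂ) : ℂ × ℂ → ℂ × ℂ := fun p => JExpl φ p (X p)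

/-- The Nijenhuis tensor `N_J(X,Y) = [JX, JY] − [X,Y] − J[JX, Y] − J[X, JY]`
of `J = J⁺_{e^{iφ}}`, on vector fields `X, Y`. -/
def nijExpl (φ : ℝ) (X Y : ℂ × ℂ → ℂ × ℂ) (p : ℂ × ℂ) : ℂ × ℂ :=
  lieBr (JExplField φ X) (JExplField φ Y) p - lieBr X Y p -
    JExpl φ p (lieBr (JExplField φ X) Y p) - JExpl φ p (lieBr X (JExplField φ Y) p)

section AuxNonInt
set_option maxRecDepth 100000
set_option maxHeartbeats 1000000

/-- Base point of the counterexample. -/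
def pt0 : ℂ × ℂ := (((1/2 : ℝ) : ℂ), 0)

lemma wpt0 : wDef pt0 = 1 := by simp [wDef, pt0]

lemma sqrt_wpt0 : Real.sqrt (wDef pt0) = 1 := by rw [wpt0, Real.sqrt_one]

lemma wDef_deriv_aux : ∃ L : (ℂ × ℂ) →L[ℝ] ℝ, HasFDerivAt wDef L pt0 ∧
    ∀ h : ℂ × ℂ, L h = 2 * h.1.re := by
  have hre := (Complex.reCLM.comp (ContinuousLinearMap.fst ℝ ℂ ℂ)).hasFDerivAt (x := pt0)
  have h2re := (Complex.reCLM.comp (ContinuousLinearMap.snd ℝ ℂ ℂ)).hasFDerivAt (x := pt0)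
  have h2im := (Complex.imCLM.comp (ContinuousLinearMap.snd ℝ ℂ ℂ)).hasFDerivAt (x := pt0)
  have hD := (hre.const_mul (2:ℝ)).sub (((h2re.mul h2re).add (h2im.mul h2im)).const_mul (2:ℝ))
  have hw := hD.congr_of_eventuallyEq (f₁ := wDef) (Filter.EventuallyEq.of_eq (funext fun p => by
      simp [wDef, Complex.normSq_apply]))
  exact ⟨_, hw, fun h => by simp [pt0]⟩

lemma jexpl_deriv_aux (φ : ℝ) (c : ℂ × ℂ) :
    ∃ L : (ℂ × ℂ) →L[ℝ] (ℂ × ℂ), HasFDerivAt (fun p => JExpl φ p c) L pt0 ∧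
      ∀ h : ℂ × ℂ, L h =
        (starRingEnd ℂ (Complex.I * Complex.exp ((φ : ℂ) * Complex.I) *
            (c.1 * h.2 - 2 * (h.1.re : ℂ) * c.2)),
         starRingEnd ℂ (Complex.I * Complex.exp ((φ : ℂ) * Complex.I) *
            (-(starRingEnd ℂ h.2 * c.2) - c.1 * (h.1.re : ℂ) / 2))) := by
  obtain ⟨Lw, hw, hwv⟩ := wDef_deriv_aux
  set e := Complex.I * Complex.exp ((φ : ℂ) * Complex.I) with he
  have hs : HasFDerivAt (fun p => Real.sqrt (wDef p)) ((1/2 : ℝ) • Lw) pt0 := by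
    have := hw.sqrt (by rw [wpt0]; norm_num)
    rw [wpt0, Real.sqrt_one] at this
    rw [mul_one] at this
    exact this
  have hsC := Complex.ofRealCLM.hasFDerivAt.comp pt0 hs
  have h2s := hsC.const_mul (2:ℂ)
  have hi0 : (2 : ℂ) * Complex.ofRealCLM (Real.sqrt (wDef pt0)) ≠ 0 := by
    rw [sqrt_wpt0]; simp
  have hinv := ((hasDerivAt_inv hi0).hasFDerivAt.restrictScalars ℝ).comp pt0 h2s
  have hsnd := (ContinuousLinearMap.snd ℝ ℂ ℂ).hasFDerivAt (x := pt0)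
  have hA := (hasFDerivAt_const c.1 pt0).sub ((hsnd.star.const_mul (2:ℂ)).mul_const c.2)
  have hQ := hA.mul hinv
  have hp2 := hsnd.const_mul (2:ℂ)
  have hT1 := hQ.mul hp2
  have hT2 := (hsC.const_mul (2:ℂ)).mul_const c.2
  have hF1 := ((hT1.sub hT2).const_mul e).star
  have hF2 := (hQ.const_mul e).star
  have hF := (hF1.prodMk hF2).congr_of_eventuallyEq (f₁ := fun p => JExpl φ p c)
    (Filter.EventuallyEq.of_eq (funext fun p => by
      simp only [JExpl, AForm, div_eq_mul_inv, starRingEnd_apply, Function.comp_apply,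
        ContinuousLinearMap.coe_snd', Complex.ofRealCLM_apply, mul_inv_rev, Function.comp,
        Pi.mul_apply, Pi.sub_apply, he]))
  refine ⟨_, hF, ?_⟩
  intro h
  simp only [ContinuousLinearMap.prod_apply, ContinuousLinearMap.coe_comp', Function.comp_apply,
    ContinuousLinearMap.smul_apply, ContinuousLinearMap.add_apply, ContinuousLinearMap.sub_apply,
    ContinuousLinearMap.smulRight_apply, ContinuousLinearMap.coe_restrictScalars',
    ContinuousLinearMap.one_apply, ContinuousLinearMap.coe_snd', ContinuousLinearMap.coe_fst',
    Complex.ofRealCLM_apply, ContinuousLinearMap.zero_apply, ContinuousLinearMap.neg_apply,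
    hwv, smul_eq_mul, Complex.real_smul, Complex.coe_smul, Pi.mul_apply, Pi.sub_apply,
    ContinuousLinearMap.toSpanSingleton_apply]
  have p02 : pt0.2 = 0 := rfl
  simp only [p02, star_zero, mul_zero, zero_mul, sqrt_wpt0, Complex.ofReal_one, mul_one,
    zero_sub, sub_zero]
  have hstar : ∀ z : ℂ, ((starL' ℝ : ℂ ≃L[ℝ] ℂ) : ℂ →L[ℝ] ℂ) z = starRingEnd ℂ z := fun z => rfl
  simp only [hstar]
  rw [Prod.mk.injEq]
  constructor <;>
  · congr 1
    push_cast
    ring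

lemma nij_comp_aux (φ : ℝ) (μ : ℂ) :
    nijExpl φ (fun _ => ((1:ℂ), (0:ℂ))) (fun _ => ((0:ℂ), μ)) pt0 =
      (0, (3/2 : ℂ) * (starRingEnd ℂ (Complex.I * Complex.exp ((φ : ℂ) * Complex.I)) *
            (Complex.I * Complex.exp ((φ : ℂ) * Complex.I)) * μ)
          - (starRingEnd ℂ (Complex.I * Complex.exp ((φ : ℂ) * Complex.I)))^2 * starRingEnd ℂ μ / 2
          - starRingEnd ℂ (Complex.I * Complex.exp ((φ : ℂ) * Complex.I)) *
              (((starRingEnd ℂ (Complex.I * Complex.exp ((φ : ℂ) * Complex.I)) * starRingEnd ℂ μ).re : ℝ) : ℂ)) := by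
  obtain ⟨LX, hLX, hLXv⟩ := jexpl_deriv_aux φ ((1:ℂ), (0:ℂ))
  obtain ⟨LY, hLY, hLYv⟩ := jexpl_deriv_aux φ ((0:ℂ), μ)
  have hfX : fderiv ℝ (JExplField φ (fun _ => ((1:ℂ), (0:ℂ)))) pt0 = LX := hLX.fderiv
  have hfY : fderiv ℝ (JExplField φ (fun _ => ((0:ℂ), μ))) pt0 = LY := hLY.fderiv
  have p02 : pt0.2 = 0 := rfl
  simp only [nijExpl, lieBr, JExplField, hfX, hfY, fderiv_fun_const, Pi.zero_apply,
    ContinuousLinearMap.zero_apply, sub_zero, zero_sub]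
  simp only [hLXv, hLYv, JExpl, AForm, p02, sqrt_wpt0, Complex.ofReal_one, mul_one, mul_zero,
    zero_mul, map_zero, star_zero, sub_zero, zero_sub, map_mul, map_sub, map_neg, map_add,
    Complex.conj_conj, map_ofNat, Complex.conj_I, Complex.conj_ofReal, map_div₀, map_one]
  simp only [Prod.fst_neg, Prod.snd_neg, map_neg, Complex.zero_re, Complex.one_re,
    Prod.mk_sub_mk, Prod.mk_add_mk, Prod.mk.injEq]
  constructor <;>
  · simp only [Complex.ext_iff, Complex.mul_re, Complex.mul_im, Complex.add_re, Complex.add_im,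
      Complex.sub_re, Complex.sub_im, Complex.neg_re, Complex.neg_im, Complex.ofReal_re,
      Complex.ofReal_im, Complex.div_re, Complex.div_im, Complex.I_re, Complex.I_im,
      Complex.conj_re, Complex.conj_im, Complex.one_re, Complex.one_im, Complex.zero_re,
      Complex.zero_im, Complex.re_ofNat, Complex.im_ofNat, Complex.normSq_apply,
      Complex.ofReal_zero, Complex.ofReal_one, Complex.I_sq, pow_two]
    constructor <;> ring

end AuxNonInt

/-- For every `φ`, the almost complex structure `J⁺_{e^{iφ}}` of the
explicit example is not integrable: its Nijenhuis tensor does not vanish identically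
on `U'`. Hence the almost-Kähler structure `(U', g, J⁺_{e^{iφ}})` is non-Kähler. -/


theorem JExpl_not_integrable (φ : ℝ) :
    ∃ X Y : ℂ × ℂ → ℂ × ℂ, ContDiff ℝ (⊤ : ℕ∞) X ∧ ContDiff ℝ (⊤ : ℕ∞) Y ∧
      ∃ p ∈ Uprime, nijExpl φ X Y p ≠ 0 := by
  have hmem : pt0 ∈ Uprime := by
    simp only [Uprime, Set.mem_setOf_eq, wpt0]; norm_num
  have habs : (Complex.exp ((φ : ℂ) * Complex.I)).re ^ 2 +
      (Complex.exp ((φ : ℂ) * Complex.I)).im ^ 2 = 1 := by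
    have h1 : ‖Complex.exp ((φ : ℂ) * Complex.I)‖ = 1 :=
      Complex.norm_exp_ofReal_mul_I φ
    have h3 : Complex.normSq (Complex.exp ((φ : ℂ) * Complex.I)) = 1 := by
      rw [← Complex.sq_norm, h1]; norm_num
    rw [Complex.normSq_apply] at h3
    linear_combination h3
  by_cases ha : (Complex.exp ((φ : ℂ) * Complex.I)).re = 0
  · refine ⟨fun _ => ((1:ℂ), (0:ℂ)), fun _ => ((0:ℂ), Complex.I), contDiff_const,
      contDiff_const, pt0, hmem, ?_⟩
    rw [nij_comp_aux]
    intro h0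
    have h2 := congrArg (fun z : ℂ × ℂ => z.2.im) h0
    simp only [Complex.ext_iff, Complex.mul_re, Complex.mul_im, Complex.add_re, Complex.add_im,
      Complex.sub_re, Complex.sub_im, Complex.neg_re, Complex.neg_im, Complex.ofReal_re,
      Complex.ofReal_im, Complex.div_re, Complex.div_im, Complex.I_re, Complex.I_im,
      Complex.conj_re, Complex.conj_im, Complex.one_re, Complex.one_im, Complex.zero_re,
      Complex.zero_im, Complex.re_ofNat, Complex.im_ofNat, Complex.normSq_apply,
      Complex.ofReal_zero, Complex.ofReal_one, Complex.I_sq, pow_two, Prod.snd_zero, Prod.fst_zero] at h2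
    ring_nf at h2
    nlinarith [habs, h2]
  · refine ⟨fun _ => ((1:ℂ), (0:ℂ)), fun _ => ((0:ℂ), (1:ℂ)), contDiff_const,
      contDiff_const, pt0, hmem, ?_⟩
    rw [nij_comp_aux]
    intro h0
    have h2 := congrArg (fun z : ℂ × ℂ => z.2.re) h0
    simp only [Complex.ext_iff, Complex.mul_re, Complex.mul_im, Complex.add_re, Complex.add_im,
      Complex.sub_re, Complex.sub_im, Complex.neg_re, Complex.neg_im, Complex.ofReal_re,
      Complex.ofReal_im, Complex.div_re, Complex.div_im, Complex.I_re, Complex.I_im,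
      Complex.conj_re, Complex.conj_im, Complex.one_re, Complex.one_im, Complex.zero_re,
      Complex.zero_im, Complex.re_ofNat, Complex.im_ofNat, Complex.normSq_apply,
      Complex.ofReal_zero, Complex.ofReal_one, Complex.I_sq, pow_two, Prod.snd_zero, Prod.fst_zero] at h2
    ring_nf at h2
    exact pow_ne_zero 2 ha (by linarith)
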